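/- For every nonnegative integer n and every integer α ≥ 1, Q_{5α}^5(5n+3) ≡ 0 (mod 2) and Q_{5α}^5(5n+4) ≡ 0 (mod 2). -/

import Mathlib

namespace Stmt8
open Finset

def mx (S : Finset ℕ) : ℕ := if h : S.Nonempty then S.max' h else 0
def mn (S : Finset ℕ) : ℕ := if h : S.Nonempty then S.min' h else 0

lemma rs_ex (S : Finset ℕ) : ∃ b, Finset.Icc b (mx S) ⊆ S :=
  ⟨mx S + 1, by rw [Finset.Icc_eq_empty (by omega)]; exact Finset.empty_subset _⟩

def rs (S : Finset ℕ) : ℕ := Nat.find (rs_ex S)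

lemma rs_spec (S : Finset ℕ) : Finset.Icc (rs S) (mx S) ⊆ S := Nat.find_spec (rs_ex S)

lemma rs_le {S : Finset ℕ} {b : ℕ} (h : Finset.Icc b (mx S) ⊆ S) : rs S ≤ b := Nat.find_le h

lemma mx_mem {S : Finset ℕ} (h : S.Nonempty) : mx S ∈ S := by
  rw [mx, dif_pos h]; exact S.max'_mem h

lemma le_mx {S : Finset ℕ} {x : ℕ} (hx : x ∈ S) : x ≤ mx S := by
  rw [mx, dif_pos ⟨x, hx⟩]; exact S.le_max' x hx

lemma mn_mem {S : Finset ℕ} (h : S.Nonempty) : mn S ∈ S := by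
  rw [mn, dif_pos h]; exact S.min'_mem h

lemma mn_le {S : Finset ℕ} {x : ℕ} (hx : x ∈ S) : mn S ≤ x := by
  rw [mn, dif_pos ⟨x, hx⟩]; exact S.min'_le x hx

lemma rs_gt {S : Finset ℕ} {b : ℕ} (h : b ∉ S) (hb : b ≤ mx S) : b < rs S := by
  by_contra hc
  exact h (rs_spec S (Finset.mem_Icc.mpr ⟨by omega, hb⟩))

lemma mx_eq {S : Finset ℕ} {M : ℕ} (h1 : M ∈ S) (h2 : ∀ x ∈ S, x ≤ M) : mx S = M :=
  le_antisymm (h2 _ (mx_mem ⟨M, h1⟩)) (le_mx h1)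

lemma mn_eq {S : Finset ℕ} {m : ℕ} (h1 : m ∈ S) (h2 : ∀ x ∈ S, m ≤ x) : mn S = m :=
  le_antisymm (mn_le h1) (h2 _ (mn_mem ⟨m, h1⟩))

section basics
variable {S : Finset ℕ}

lemma mn_pos (h0 : 0 ∉ S) (hne : S.Nonempty) : 1 ≤ mn S := by
  rcases Nat.eq_zero_or_pos (mn S) with h | h
  · exact absurd (h ▸ mn_mem hne) h0
  · exact h

lemma mn_le_mx (hne : S.Nonempty) : mn S ≤ mx S := le_mx (mn_mem hne)

lemma rs_le_mx (hne : S.Nonempty) : rs S ≤ mx S := by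
  refine rs_le fun x hx => ?_
  rw [Finset.mem_Icc] at hx
  have : x = mx S := le_antisymm hx.2 hx.1
  exact this ▸ mx_mem hne

lemma rs_pos (h0 : 0 ∉ S) : 1 ≤ rs S := rs_gt h0 (Nat.zero_le _)

lemma rs_mem (hne : S.Nonempty) : rs S ∈ S := rs_spec S (Finset.mem_Icc.mpr ⟨le_rfl, rs_le_mx hne⟩)

lemma mn_le_rs (hne : S.Nonempty) : mn S ≤ rs S := mn_le (rs_mem hne)

lemma rs_pred_not_mem (h0 : 0 ∉ S) : rs S - 1 ∉ S := by
  intro h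
  have h1 : 1 ≤ rs S := rs_pos h0
  have : rs S ≤ rs S - 1 := by
    refine rs_le fun x hx => ?_
    rw [Finset.mem_Icc] at hx
    rcases Nat.eq_or_lt_of_le hx.1 with h' | h'
    · exact h'.symm ▸ h
    · exact rs_spec S (Finset.mem_Icc.mpr ⟨by omega, hx.2⟩)
  omega

lemma run_sub : ∀ x, rs S ≤ x → x ≤ mx S → x ∈ S := fun x h1 h2 =>
  rs_spec S (Finset.mem_Icc.mpr ⟨h1, h2⟩)

end basics

/-- Franklin's involution -/
def frank (S : Finset ℕ) : Finset ℕ :=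
  if mn S + rs S ≤ mx S + 1 then
    ((S.erase (mn S)) \ Finset.Icc (mx S + 1 - mn S) (mx S)) ∪
      Finset.Icc (mx S + 2 - mn S) (mx S + 1)
  else
    insert (mx S + 1 - rs S)
      ((S \ Finset.Icc (rs S) (mx S)) ∪ Finset.Icc (rs S - 1) (mx S - 1))



lemma frank_eq1 {S : Finset ℕ} (h : mn S + rs S ≤ mx S + 1) :
    frank S = ((S.erase (mn S)) \ Finset.Icc (mx S + 1 - mn S) (mx S)) ∪
      Finset.Icc (mx S + 2 - mn S) (mx S + 1) := by
  rw [frank, if_pos h]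

lemma frank_eq2 {S : Finset ℕ} (h : ¬ (mn S + rs S ≤ mx S + 1)) :
    frank S = insert (mx S + 1 - rs S)
      ((S \ Finset.Icc (rs S) (mx S)) ∪ Finset.Icc (rs S - 1) (mx S - 1)) := by
  rw [frank, if_neg h]

lemma case1_core {S : Finset ℕ} {M s : ℕ}
    (h0 : 0 ∉ S) (hsmem : s ∈ S) (hMmem : M ∈ S)
    (hsl : ∀ x ∈ S, s ≤ x) (hMu : ∀ x ∈ S, x ≤ M)
    (hrun : ∀ x, M + 1 - s ≤ x → x ≤ M → x ∈ S)
    (h1 : 1 ≤ s) (h2 : 2 * s ≤ M) :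
    (∑ x ∈ ((S.erase s) \ Finset.Icc (M + 1 - s) M) ∪ Finset.Icc (M + 2 - s) (M + 1), x)
        = (∑ x ∈ S, x) ∧
    0 ∉ ((S.erase s) \ Finset.Icc (M + 1 - s) M) ∪ Finset.Icc (M + 2 - s) (M + 1) ∧
    ((S.erase s) \ Finset.Icc (M + 1 - s) M) ∪ Finset.Icc (M + 2 - s) (M + 1) ≠ S ∧
    frank (((S.erase s) \ Finset.Icc (M + 1 - s) M) ∪ Finset.Icc (M + 2 - s) (M + 1)) = S := by
  set T := ((S.erase s) \ Finset.Icc (M + 1 - s) M) ∪ Finset.Icc (M + 2 - s) (M + 1) with hT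
  have hsM : s ≤ M := hMu s hsmem
  have hmemT : ∀ x, x ∈ T ↔ (x ∈ S ∧ x ≠ s ∧ x + s ≤ M) ∨ (M + 2 - s ≤ x ∧ x ≤ M + 1) := by
    intro x
    simp only [hT, Finset.mem_union, Finset.mem_sdiff, Finset.mem_erase, Finset.mem_Icc]
    constructor
    · rintro (⟨⟨hxs, hxS⟩, hI⟩ | h)
      · exact Or.inl ⟨hxS, hxs, by have := hMu x hxS; omega⟩
      · exact Or.inr h
    · rintro (⟨hxS, hxs, hb⟩ | h)
      · exact Or.inl ⟨⟨hxs, hxS⟩, by omega⟩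
      · exact Or.inr h
  -- sum
  have hIsub : Finset.Icc (M + 1 - s) M ⊆ S.erase s := by
    intro x hx
    rw [Finset.mem_Icc] at hx
    exact Finset.mem_erase.mpr ⟨by omega, hrun x hx.1 hx.2⟩
  have hdisj : Disjoint ((S.erase s) \ Finset.Icc (M + 1 - s) M)
      (Finset.Icc (M + 2 - s) (M + 1)) := by
    rw [Finset.disjoint_left]
    intro x hx hx'
    rw [Finset.mem_sdiff, Finset.mem_erase, Finset.mem_Icc] at hx
    rw [Finset.mem_Icc] at hx'
    have := hMu x hx.1.2
    omega
  have himg : Finset.Icc (M + 2 - s) (M + 1) = (Finset.Icc (M + 1 - s) M).image (· + 1) := by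
    rw [Finset.image_add_right_Icc]
    congr 1
    omega
  have hsumJ : (∑ x ∈ Finset.Icc (M + 2 - s) (M + 1), x)
      = (∑ x ∈ Finset.Icc (M + 1 - s) M, x) + s := by
    rw [himg, Finset.sum_image (by intro a _ b _ h; simp only at h; omega)]
    have h' : (∑ x ∈ Finset.Icc (M + 1 - s) M, (x + 1))
        = (∑ x ∈ Finset.Icc (M + 1 - s) M, x) + ∑ _x ∈ Finset.Icc (M + 1 - s) M, 1 :=
      Finset.sum_add_distrib
    rw [h', Finset.sum_const, smul_eq_mul, mul_one, Nat.card_Icc]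
    omega
  have hsd : (∑ x ∈ (S.erase s) \ Finset.Icc (M + 1 - s) M, x)
      + (∑ x ∈ Finset.Icc (M + 1 - s) M, x) = (∑ x ∈ S.erase s, x) :=
    Finset.sum_sdiff hIsub
  have her : (∑ x ∈ S.erase s, x) + s = (∑ x ∈ S, x) :=
    Finset.sum_erase_add S _ hsmem
  have hsum : (∑ x ∈ T, x) = (∑ x ∈ S, x) := by
    rw [hT, Finset.sum_union hdisj, hsumJ]
    omega
  have h0T : 0 ∉ T := by
    rw [hmemT]
    rintro (⟨h, _, _⟩ | h)
    · exact h0 h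
    · omega
  have hneT : T ≠ S := by
    intro h
    have : s ∈ T := h.symm ▸ hsmem
    rw [hmemT] at this
    rcases this with ⟨_, h', _⟩ | h'
    · exact h' rfl
    · omega
  refine ⟨hsum, h0T, hneT, ?_⟩
  -- now compute frank T
  have hmxT : mx T = M + 1 := by
    refine mx_eq ?_ ?_
    · rw [hmemT]; right; omega
    · intro x hx
      rw [hmemT] at hx
      rcases hx with ⟨hxS, _, _⟩ | h
      · have := hMu x hxS; omega
      · omega
  have hM1T : M + 1 - s ∉ T := by
    rw [hmemT]
    rintro (⟨_, _, h⟩ | h) <;> omega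
  have hrsT : rs T = M + 2 - s := by
    have hle : rs T ≤ M + 2 - s := by
      refine rs_le ?_
      intro x hx
      rw [hmxT, Finset.mem_Icc] at hx
      rw [hmemT]; right; omega
    have hgt : M + 1 - s < rs T := rs_gt hM1T (by rw [hmxT]; omega)
    omega
  have hmnT : s < mn T := by
    have hmem := mn_mem (⟨M + 1, by rw [hmemT]; right; omega⟩ : T.Nonempty)
    rw [hmemT] at hmem
    rcases hmem with ⟨hxS, hxs, _⟩ | h
    · have := hsl _ hxS; omega
    · omega
  have hbr : ¬ (mn T + rs T ≤ mx T + 1) := by rw [hmxT, hrsT]; omega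
  rw [frank_eq2 hbr, hmxT, hrsT]
  have e1 : M + 1 + 1 - (M + 2 - s) = s := by omega
  have e2 : M + 2 - s - 1 = M + 1 - s := by omega
  rw [e1, e2]
  ext x
  simp only [Finset.mem_insert, Finset.mem_union, Finset.mem_sdiff, Finset.mem_Icc, hmemT]
  constructor
  · rintro (rfl | ⟨(⟨hxS, _, _⟩ | h), hn⟩ | ⟨ha, hb⟩)
    · exact hsmem
    · exact hxS
    · omega
    · exact hrun x ha hb
  · intro hxS
    have hxM := hMu x hxS
    by_cases hxs : x = s
    · exact Or.inl hxs
    · by_cases hxb : x + s ≤ M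
      · exact Or.inr (Or.inl ⟨Or.inl ⟨hxS, hxs, hxb⟩, by omega⟩)
      · exact Or.inr (Or.inr ⟨by omega, hxM⟩)

lemma case2_core {S : Finset ℕ} {M s a : ℕ}
    (h0 : 0 ∉ S) (hsmem : s ∈ S) (hMmem : M ∈ S)
    (hsl : ∀ x ∈ S, s ≤ x) (hMu : ∀ x ∈ S, x ≤ M)
    (hrun : ∀ x, a ≤ x → x ≤ M → x ∈ S)
    (hanot : a - 1 ∉ S)
    (haM : a ≤ M) (h1 : 1 ≤ s)
    (hc : M + 2 ≤ s + a) (h2 : M + 3 ≤ 2 * a) :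
    (∑ x ∈ insert (M + 1 - a) ((S \ Finset.Icc a M) ∪ Finset.Icc (a - 1) (M - 1)), x)
        = (∑ x ∈ S, x) ∧
    0 ∉ insert (M + 1 - a) ((S \ Finset.Icc a M) ∪ Finset.Icc (a - 1) (M - 1)) ∧
    insert (M + 1 - a) ((S \ Finset.Icc a M) ∪ Finset.Icc (a - 1) (M - 1)) ≠ S ∧
    frank (insert (M + 1 - a) ((S \ Finset.Icc a M) ∪ Finset.Icc (a - 1) (M - 1))) = S := by
  set T := insert (M + 1 - a) ((S \ Finset.Icc a M) ∪ Finset.Icc (a - 1) (M - 1)) with hT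
  have hamem : a ∈ S := hrun a le_rfl haM
  have hsa : s ≤ a := hsl a hamem
  have ha3 : 3 ≤ a := by omega
  have hsr : M + 2 - a ≤ s := by omega
  have hmemT : ∀ x, x ∈ T ↔ x = M + 1 - a ∨ (x ∈ S ∧ x + 2 ≤ a) ∨
      (a - 1 ≤ x ∧ x ≤ M - 1) := by
    intro x
    simp only [hT, Finset.mem_insert, Finset.mem_union, Finset.mem_sdiff, Finset.mem_Icc]
    constructor
    · rintro (rfl | ⟨hxS, hn⟩ | h)
      · exact Or.inl rfl
      · refine Or.inr (Or.inl ⟨hxS, ?_⟩)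
        have hxM := hMu x hxS
        have hxa : x ≠ a - 1 := fun h => hanot (h ▸ hxS)
        omega
      · exact Or.inr (Or.inr h)
    · rintro (rfl | ⟨hxS, hx⟩ | h)
      · exact Or.inl rfl
      · exact Or.inr (Or.inl ⟨hxS, by omega⟩)
      · exact Or.inr (Or.inr h)
  have hrnotin : M + 1 - a ∉ (S \ Finset.Icc a M) ∪ Finset.Icc (a - 1) (M - 1) := by
    simp only [Finset.mem_union, Finset.mem_sdiff, Finset.mem_Icc]
    rintro (⟨hxS, _⟩ | h)
    · have := hsl _ hxS; omega
    · omega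
  have hdisj : Disjoint (S \ Finset.Icc a M) (Finset.Icc (a - 1) (M - 1)) := by
    rw [Finset.disjoint_left]
    intro x hx hx'
    rw [Finset.mem_sdiff, Finset.mem_Icc] at hx
    rw [Finset.mem_Icc] at hx'
    have := hMu x hx.1
    have hxa : x ≠ a - 1 := fun h => hanot (h ▸ hx.1)
    omega
  have hIsub : Finset.Icc a M ⊆ S := fun x hx => by
    rw [Finset.mem_Icc] at hx; exact hrun x hx.1 hx.2
  have himg : Finset.Icc a M = (Finset.Icc (a - 1) (M - 1)).image (· + 1) := by
    rw [Finset.image_add_right_Icc]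
    congr 1 <;> omega
  have hsumI : (∑ x ∈ Finset.Icc a M, x)
      = (∑ x ∈ Finset.Icc (a - 1) (M - 1), x) + (M + 1 - a) := by
    rw [himg, Finset.sum_image (by intro u _ v _ h; simp only at h; omega)]
    have h' : (∑ x ∈ Finset.Icc (a - 1) (M - 1), (x + 1))
        = (∑ x ∈ Finset.Icc (a - 1) (M - 1), x) + ∑ _x ∈ Finset.Icc (a - 1) (M - 1), 1 :=
      Finset.sum_add_distrib
    rw [h', Finset.sum_const, smul_eq_mul, mul_one, Nat.card_Icc]
    omega
  have hsd : (∑ x ∈ S \ Finset.Icc a M, x) + (∑ x ∈ Finset.Icc a M, x) = (∑ x ∈ S, x) :=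
    Finset.sum_sdiff hIsub
  have hsum : (∑ x ∈ T, x) = (∑ x ∈ S, x) := by
    rw [hT, Finset.sum_insert hrnotin, Finset.sum_union hdisj]
    omega
  have h0T : 0 ∉ T := by
    rw [hmemT]
    rintro (h | ⟨h, _⟩ | h)
    · omega
    · exact h0 h
    · omega
  have hrS : M + 1 - a ∉ S := by
    intro h
    have := hsl _ h
    omega
  have hneT : T ≠ S := by
    intro h
    exact hrS (h ▸ (hmemT (M + 1 - a)).mpr (Or.inl rfl))
  refine ⟨hsum, h0T, hneT, ?_⟩
  have hmxT : mx T = M - 1 := by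
    refine mx_eq ?_ ?_
    · rw [hmemT]; right; right; omega
    · intro x hx
      rw [hmemT] at hx
      rcases hx with rfl | ⟨hxS, hxa⟩ | h <;> omega
  have hmnT : mn T = M + 1 - a := by
    refine mn_eq ((hmemT _).mpr (Or.inl rfl)) ?_
    intro x hx
    rw [hmemT] at hx
    rcases hx with rfl | ⟨hxS, _⟩ | h
    · omega
    · have := hsl _ hxS; omega
    · omega
  have hrsT : rs T ≤ a - 1 := by
    refine rs_le ?_
    intro x hx
    rw [hmxT, Finset.mem_Icc] at hx
    rw [hmemT]; right; right; exact hx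
  have hbr : mn T + rs T ≤ mx T + 1 := by omega
  rw [frank_eq1 hbr, hmnT, hmxT]
  have e1 : M - 1 + 1 - (M + 1 - a) = a - 1 := by omega
  have e2 : M - 1 + 2 - (M + 1 - a) = a := by omega
  have e3 : M - 1 + 1 = M := by omega
  rw [e1, e2, e3]
  ext x
  simp only [Finset.mem_union, Finset.mem_sdiff, Finset.mem_erase, Finset.mem_Icc, hmemT]
  constructor
  · rintro (⟨⟨hxr, rfl | ⟨hxS, _⟩ | h⟩, hn⟩ | ⟨ha', hb'⟩)
    · exact absurd rfl hxr
    · exact hxS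
    · omega
    · exact hrun x ha' hb'
  · intro hxS
    have hxM := hMu x hxS
    have hxs := hsl x hxS
    by_cases hxa : x + 2 ≤ a
    · refine Or.inl ⟨⟨?_, Or.inr (Or.inl ⟨hxS, hxa⟩)⟩, by omega⟩
      intro h
      exact hrS (h ▸ hxS)
    · have hxa1 : x ≠ a - 1 := fun h => hanot (h ▸ hxS)
      exact Or.inr ⟨by omega, hxM⟩

lemma shape1_mod5 {j m : ℕ} (hm : m = ∑ x ∈ Finset.Icc (j+1) (2*j+1), x) :
    m % 5 ≠ 3 ∧ m % 5 ≠ 4 := by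
  have h2 : (∑ x ∈ Finset.Ico 0 (j+1), x) + (∑ x ∈ Finset.Ico (j+1) (2*j+2), x)
      = ∑ x ∈ Finset.Ico 0 (2*j+2), x :=
    Finset.sum_Ico_consecutive _ (by omega) (by omega)
  have hIccIco : Finset.Icc (j+1) (2*j+1) = Finset.Ico (j+1) (2*j+2) := by
    rw [← Finset.Ico_add_one_right_eq_Icc]; rfl
  have hr0 : ∀ n : ℕ, Finset.Ico 0 n = Finset.range n := fun n => (Finset.range_eq_Ico n).symm
  rw [hr0 (j+1), hr0 (2*j+2)] at h2
  have r1 : (∑ x ∈ Finset.range (j+1), x) * 2 = (j+1) * j :=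
    Finset.sum_range_id_mul_two (j+1)
  have r2 : (∑ x ∈ Finset.range (2*j+2), x) * 2 = (2*j+2) * (2*j+1) :=
    Finset.sum_range_id_mul_two (2*j+2)
  have e : 2 * m + (j+1) * j = (2*j+2) * (2*j+1) := by rw [hm, hIccIco]; omega
  have hc := congrArg (fun n : ℕ => (n : ZMod 5)) e
  push_cast at hc
  have hmod : (m : ZMod 5) = ((m % 5 : ℕ) : ZMod 5) := (ZMod.natCast_mod m 5).symm
  constructor <;> intro h
  · have hm5 : (m : ZMod 5) = 3 := by rw [hmod, h]; norm_num
    rw [hm5] at hc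
    exact (by decide : ∀ z : ZMod 5, ¬ (2 * 3 + (z+1)*z = (2*z+2)*(2*z+1))) (j : ZMod 5) hc
  · have hm5 : (m : ZMod 5) = 4 := by rw [hmod, h]; norm_num
    rw [hm5] at hc
    exact (by decide : ∀ z : ZMod 5, ¬ (2 * 4 + (z+1)*z = (2*z+2)*(2*z+1))) (j : ZMod 5) hc

lemma shape2_mod5 {j m : ℕ} (hm : m = ∑ x ∈ Finset.Icc (j+2) (2*j+2), x) :
    m % 5 ≠ 3 ∧ m % 5 ≠ 4 := by
  have h2 : (∑ x ∈ Finset.Ico 0 (j+2), x) + (∑ x ∈ Finset.Ico (j+2) (2*j+3), x)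
      = ∑ x ∈ Finset.Ico 0 (2*j+3), x :=
    Finset.sum_Ico_consecutive _ (by omega) (by omega)
  have hIccIco : Finset.Icc (j+2) (2*j+2) = Finset.Ico (j+2) (2*j+3) := by
    rw [← Finset.Ico_add_one_right_eq_Icc]; rfl
  have hr0 : ∀ n : ℕ, Finset.Ico 0 n = Finset.range n := fun n => (Finset.range_eq_Ico n).symm
  rw [hr0 (j+2), hr0 (2*j+3)] at h2
  have r1 : (∑ x ∈ Finset.range (j+2), x) * 2 = (j+2) * (j+1) :=
    Finset.sum_range_id_mul_two (j+2)
  have r2 : (∑ x ∈ Finset.range (2*j+3), x) * 2 = (2*j+3) * (2*j+2) :=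
    Finset.sum_range_id_mul_two (2*j+3)
  have e : 2 * m + (j+2) * (j+1) = (2*j+3) * (2*j+2) := by rw [hm, hIccIco]; omega
  have hc := congrArg (fun n : ℕ => (n : ZMod 5)) e
  push_cast at hc
  have hmod : (m : ZMod 5) = ((m % 5 : ℕ) : ZMod 5) := (ZMod.natCast_mod m 5).symm
  constructor <;> intro h
  · have hm5 : (m : ZMod 5) = 3 := by rw [hmod, h]; norm_num
    rw [hm5] at hc
    exact (by decide : ∀ z : ZMod 5, ¬ (2 * 3 + (z+2)*(z+1) = (2*z+3)*(2*z+2))) (j : ZMod 5) hc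
  · have hm5 : (m : ZMod 5) = 4 := by rw [hmod, h]; norm_num
    rw [hm5] at hc
    exact (by decide : ∀ z : ZMod 5, ¬ (2 * 4 + (z+2)*(z+1) = (2*z+3)*(2*z+2))) (j : ZMod 5) hc

lemma frank_good {S : Finset ℕ} (h0 : 0 ∉ S) (hne : S.Nonempty)
    (h5 : (∑ x ∈ S, x) % 5 = 3 ∨ (∑ x ∈ S, x) % 5 = 4) :
    (∑ x ∈ frank S, x) = (∑ x ∈ S, x) ∧ 0 ∉ frank S ∧ frank S ≠ S ∧
      frank (frank S) = S := by
  have hs1 : 1 ≤ mn S := mn_pos h0 hne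
  have hsM : mn S ≤ mx S := mn_le_mx hne
  have haM : rs S ≤ mx S := rs_le_mx hne
  have ha1 : 1 ≤ rs S := rs_pos h0
  have hsa : mn S ≤ rs S := mn_le_rs hne
  by_cases hc : mn S + rs S ≤ mx S + 1
  · by_cases h2 : 2 * mn S ≤ mx S
    · rw [frank_eq1 hc]
      exact case1_core h0 (mn_mem hne) (mx_mem hne) (fun x hx => mn_le hx)
        (fun x hx => le_mx hx)
        (fun x hx1 hx2 => run_sub x (by omega) hx2) hs1 h2
    · -- exceptional shape 1 : S = Icc (mn S) (2 * mn S - 1)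
      exfalso
      have hax : rs S = mn S := by omega
      have hMx : mx S = 2 * mn S - 1 := by omega
      have hShape : S = Finset.Icc (mn S) (2 * mn S - 1) := by
        apply Finset.Subset.antisymm
        · intro x hx
          rw [Finset.mem_Icc]
          exact ⟨mn_le hx, by have := le_mx hx; omega⟩
        · intro x hx
          rw [Finset.mem_Icc] at hx
          exact run_sub x (by omega) (by omega)
      obtain ⟨j, hj⟩ : ∃ j, mn S = j + 1 := ⟨mn S - 1, by omega⟩
      have := shape1_mod5 (m := ∑ x ∈ S, x)
        (by rw [hShape, hj, show 2*(j+1)-1 = 2*j+1 from by omega])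
      rcases h5 with h | h
      · exact this.1 h
      · exact this.2 h
  · by_cases h2 : mx S + 3 ≤ 2 * rs S
    · rw [frank_eq2 hc]
      exact case2_core h0 (mn_mem hne) (mx_mem hne) (fun x hx => mn_le hx)
        (fun x hx => le_mx hx) (fun x hx1 hx2 => run_sub x hx1 hx2)
        (rs_pred_not_mem h0) haM hs1 (by omega) h2
    · -- exceptional shape 2 : S = Icc (mn S) (2 * mn S - 2)
      exfalso
      have hax : rs S = mn S := by omega
      have hMx : mx S = 2 * mn S - 2 := by omega
      have hs2 : 2 ≤ mn S := by omega
      have hShape : S = Finset.Icc (mn S) (2 * mn S - 2) := by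
        apply Finset.Subset.antisymm
        · intro x hx
          rw [Finset.mem_Icc]
          exact ⟨mn_le hx, by have := le_mx hx; omega⟩
        · intro x hx
          rw [Finset.mem_Icc] at hx
          exact run_sub x (by omega) (by omega)
      obtain ⟨j, hj⟩ : ∃ j, mn S = j + 2 := ⟨mn S - 2, by omega⟩
      have := shape2_mod5 (m := ∑ x ∈ S, x)
        (by rw [hShape, hj, show 2*(j+2)-2 = 2*j+2 from by omega])
      rcases h5 with h | h
      · exact this.1 h
      · exact this.2 h

def pset (m : ℕ) (P : ℕ → Prop) [DecidablePred P] : Finset (Finset ℕ) :=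
  ((Finset.range (m+1)).powerset).filter
    (fun S => 0 ∉ S ∧ (∑ x ∈ S, x) = m ∧ ∀ x ∈ S, P x)

lemma mem_pset {m : ℕ} {P : ℕ → Prop} [DecidablePred P] {S : Finset ℕ} :
    S ∈ pset m P ↔ 0 ∉ S ∧ (∑ x ∈ S, x) = m ∧ ∀ x ∈ S, P x := by
  rw [pset, Finset.mem_filter, Finset.mem_powerset]
  constructor
  · exact fun h => h.2
  · intro h
    refine ⟨fun x hx => Finset.mem_range.mpr ?_, h⟩
    have hle : x ≤ ∑ y ∈ S, y :=
      Finset.single_le_sum (f := fun y => y) (fun y _ => Nat.zero_le y) hx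
    omega

lemma pset_all_even {m : ℕ} (h5 : m % 5 = 3 ∨ m % 5 = 4) :
    ((pset m (fun _ => True)).card : ZMod 2) = 0 := by
  have hcard : ((pset m (fun _ => True)).card : ZMod 2)
      = ∑ _S ∈ pset m (fun _ => True), (1 : ZMod 2) := by
    rw [Finset.sum_const, nsmul_eq_mul, mul_one]
  rw [hcard]
  have key : ∀ S ∈ pset m (fun _ => True),
      (∑ x ∈ frank S, x) = (∑ x ∈ S, x) ∧ 0 ∉ frank S ∧ frank S ≠ S ∧
        frank (frank S) = S := by
    intro S hS
    rw [mem_pset] at hS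
    have hne : S.Nonempty := by
      rcases Finset.eq_empty_or_nonempty S with rfl | h
      · exfalso; simp at hS; omega
      · exact h
    exact frank_good hS.1 hne (by rw [hS.2.1]; exact h5)
  have gmem : ∀ S (hS : S ∈ pset m (fun _ => True)), frank S ∈ pset m (fun _ => True) := by
    intro S hS
    obtain ⟨hsum, h0, hne, hinv⟩ := key S hS
    rw [mem_pset] at hS ⊢
    exact ⟨h0, by rw [hsum, hS.2.1], fun x _ => trivial⟩
  exact Finset.sum_involution (fun S _ => frank S)
    (fun S hS => by decide)
    (fun S hS _ => (key S hS).2.2.1)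
    gmem
    (fun S hS => (key S hS).2.2.2)

lemma pset_convolution (m : ℕ) (P : ℕ → Prop) [DecidablePred P] :
    (pset m (fun _ => True)).card
      = ∑ j ∈ Finset.range (m+1),
          (pset j P).card * (pset (m-j) (fun x => ¬ P x)).card := by
  have hT : ((Finset.range (m+1)).sigma
      (fun j => (pset j P) ×ˢ (pset (m-j) (fun x => ¬ P x)))).card
      = ∑ j ∈ Finset.range (m+1),
          (pset j P).card * (pset (m-j) (fun x => ¬ P x)).card := by
    rw [Finset.card_sigma]
    exact Finset.sum_congr rfl fun j _ => Finset.card_product _ _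
  rw [← hT]
  refine Finset.card_bij'
    (i := fun S _ => ⟨∑ x ∈ S.filter P, x, (S.filter P, S.filter (fun x => ¬ P x))⟩)
    (j := fun p _ => p.2.1 ∪ p.2.2) ?_ ?_ ?_ ?_
  · -- i maps into sigma
    intro S hS
    rw [mem_pset] at hS
    obtain ⟨h0, hsum, -⟩ := hS
    have hsplit : (∑ x ∈ S.filter P, x) + (∑ x ∈ S.filter (fun x => ¬ P x), x)
        = ∑ x ∈ S, x := Finset.sum_filter_add_sum_filter_not S P _
    refine Finset.mem_sigma.mpr ⟨Finset.mem_range.mpr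
        (show (∑ x ∈ S.filter P, x) < m + 1 by omega),
      Finset.mem_product.mpr ⟨mem_pset.mpr ⟨fun h => h0 (Finset.mem_filter.mp h).1, rfl,
        fun x hx => (Finset.mem_filter.mp hx).2⟩,
      mem_pset.mpr ⟨fun h => h0 (Finset.mem_filter.mp h).1,
        show (∑ x ∈ S.filter (fun x => ¬ P x), x) = m - (∑ x ∈ S.filter P, x) by omega,
        fun x hx => (Finset.mem_filter.mp hx).2⟩⟩⟩
  · -- j maps back
    rintro ⟨j, S₁, S₂⟩ hp
    rw [Finset.mem_sigma, Finset.mem_range, Finset.mem_product, mem_pset, mem_pset] at hp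
    obtain ⟨hj, ⟨h01, hs1, hP1⟩, ⟨h02, hs2, hP2⟩⟩ := hp
    have hdisj : Disjoint S₁ S₂ := by
      rw [Finset.disjoint_left]
      intro x hx1 hx2
      exact hP2 x hx2 (hP1 x hx1)
    rw [mem_pset]
    refine ⟨?_, ?_, fun x _ => trivial⟩
    · rw [Finset.mem_union]
      rintro (h | h)
      · exact h01 h
      · exact h02 h
    · rw [Finset.sum_union hdisj, hs1, hs2]; omega
  · -- left inverse
    intro S hS
    exact Finset.filter_union_filter_not_eq (p := P) S
  · -- right inverse
    rintro ⟨j, S₁, S₂⟩ hp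
    simp only [Finset.mem_sigma, Finset.mem_range, Finset.mem_product, mem_pset] at hp
    obtain ⟨hj, ⟨h01, hs1, hP1⟩, ⟨h02, hs2, hP2⟩⟩ := hp
    have h1 : (S₁ ∪ S₂).filter P = S₁ := by
      rw [Finset.filter_union, Finset.filter_eq_self.mpr hP1,
        Finset.filter_false_of_mem hP2, Finset.union_empty]
    have h2 : (S₁ ∪ S₂).filter (fun x => ¬ P x) = S₂ := by
      rw [Finset.filter_union, Finset.filter_eq_self.mpr hP2,
        Finset.filter_false_of_mem (fun x hx h => h (hP1 x hx)), Finset.empty_union]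
    simp only [h1, h2, hs1]

lemma pset_zero (P : ℕ → Prop) [DecidablePred P] : pset 0 P = {∅} := by
  ext S
  rw [mem_pset, Finset.mem_singleton]
  constructor
  · rintro ⟨h0, hsum, -⟩
    rw [Finset.eq_empty_iff_forall_notMem]
    intro x hx
    have hle : x ≤ ∑ y ∈ S, y :=
      Finset.single_le_sum (f := fun y => y) (fun y _ => Nat.zero_le y) hx
    have : x = 0 := by omega
    exact h0 (this ▸ hx)
  · rintro rfl
    exact ⟨by simp, by simp, by simp⟩

lemma excluded_dvd {α x : ℕ} (hα : 1 ≤ α)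
    (hx : x % (5*α) = 5 % (5*α) ∨ x % (5*α) = (5*α-5) % (5*α)) : 5 ∣ x := by
  have hta : (5:ℕ) ∣ 5*α := ⟨α, rfl⟩
  have h1 : (5:ℕ) ∣ 5 % (5*α) := (Nat.dvd_mod_iff hta).mpr ⟨1, rfl⟩
  have h2 : (5:ℕ) ∣ (5*α-5) % (5*α) := (Nat.dvd_mod_iff hta).mpr ⟨α-1, by omega⟩
  have hd := Nat.div_add_mod x (5*α)
  have h3 : (5:ℕ) ∣ (5*α) * (x / (5*α)) := ⟨α * (x / (5*α)), by ring⟩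
  rcases hx with h | h <;> omega

lemma pset_excl_empty {α k : ℕ} (hα : 1 ≤ α) (hk : ¬ 5 ∣ k) :
    pset k (fun x => ¬ (x % (5*α) ≠ 5 % (5*α) ∧ x % (5*α) ≠ (5*α-5) % (5*α))) = ∅ := by
  rw [Finset.eq_empty_iff_forall_notMem]
  intro S hS
  rw [mem_pset] at hS
  obtain ⟨h0, hsum, hall⟩ := hS
  apply hk
  rw [← hsum]
  refine Finset.dvd_sum fun x hx => excluded_dvd hα ?_
  have h := hall x hx
  rcases not_and_or.mp h with h' | h'
  · exact Or.inl (not_not.mp h')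
  · exact Or.inr (not_not.mp h')

lemma sum_val (S : Finset ℕ) : S.val.sum = ∑ x ∈ S, x := by
  rw [Finset.sum]
  rw [Multiset.map_id']

lemma toFinset_sum {pr : Multiset ℕ} (h : pr.Nodup) : (∑ x ∈ pr.toFinset, x) = pr.sum := by
  rw [← sum_val, Multiset.toFinset_val, Multiset.dedup_eq_self.mpr h]

lemma val_toFinset' (S : Finset ℕ) : S.val.toFinset = S := by
  apply Finset.val_injective
  rw [Multiset.toFinset_val, Multiset.dedup_eq_self.mpr S.nodup]

lemma main_even {α : ℕ} (hα : 1 ≤ α) (c : ℕ) (hc : c = 3 ∨ c = 4) :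
    ∀ n : ℕ, (((pset (5*n+c)
      (fun x => x % (5*α) ≠ 5 % (5*α) ∧ x % (5*α) ≠ (5*α-5) % (5*α))).card : ZMod 2)) = 0 := by
  intro n
  induction n using Nat.strong_induction_on with
  | _ n ih =>
  set P : ℕ → Prop :=
    fun x => x % (5*α) ≠ 5 % (5*α) ∧ x % (5*α) ≠ (5*α-5) % (5*α) with hP
  have conv := pset_convolution (5*n+c) P
  have hall0 : ((pset (5*n+c) (fun _ => True)).card : ZMod 2) = 0 :=
    pset_all_even (by omega)
  have hcc := congrArg (fun k : ℕ => (k : ZMod 2)) conv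
  push_cast at hcc
  rw [hall0] at hcc
  have hsum0 : ∀ j ∈ Finset.range (5*n+c+1), j ≠ 5*n+c →
      (((pset j P).card : ZMod 2) * ((pset (5*n+c-j) (fun x => ¬ P x)).card : ZMod 2)) = 0 := by
    intro j hj hne
    rw [Finset.mem_range] at hj
    by_cases hdv : 5 ∣ (5*n+c-j)
    · obtain ⟨d, hd⟩ := hdv
      obtain ⟨n', hlt, rfl⟩ : ∃ n', n' < n ∧ j = 5*n'+c := ⟨n - d, by omega, by omega⟩
      rw [ih n' hlt, zero_mul]
    · have hempty : pset (5*n+c-j) (fun x => ¬ P x) = ∅ := pset_excl_empty hα hdv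
      rw [hempty]
      simp
  rw [Finset.sum_eq_single_of_mem (5*n+c) (Finset.self_mem_range_succ _) hsum0] at hcc
  rw [Nat.sub_self] at hcc
  have h0' : pset 0 (fun x => ¬ P x) = {∅} := pset_zero _
  rw [h0', Finset.card_singleton] at hcc
  push_cast at hcc
  rw [mul_one] at hcc
  exact hcc.symm

end Stmt8

/-- `Q t s n` is the number of partitions of `n` into distinct parts such that
no part is congruent to `s` or `t - s` modulo `t`. -/
noncomputable def Q (t s n : ℕ) : ℕ :=
  Nat.card {p : n.Partition // p.parts.Nodup ∧
    ∀ x ∈ p.parts, x % t ≠ s % t ∧ x % t ≠ (t - s) % t}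

lemma Q_eq_pset (t s n : ℕ) :
    Q t s n = (Stmt8.pset n (fun x => x % t ≠ s % t ∧ x % t ≠ (t - s) % t)).card := by
  rw [Q, ← Nat.card_eq_finsetCard]
  apply Nat.card_congr
  refine
    { toFun := fun p => ⟨p.1.parts.toFinset, Stmt8.mem_pset.mpr
        ⟨fun h => by simpa using p.1.parts_pos (Multiset.mem_toFinset.mp h),
         by rw [Stmt8.toFinset_sum p.2.1, p.1.parts_sum],
         fun x hx => p.2.2 x (Multiset.mem_toFinset.mp hx)⟩⟩
      invFun := fun S => ⟨⟨S.1.val,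
          fun {i} hi => Nat.pos_of_ne_zero
            (fun h => (Stmt8.mem_pset.mp S.2).1 (Finset.mem_def.mpr (h ▸ hi))),
          by rw [Stmt8.sum_val]; exact (Stmt8.mem_pset.mp S.2).2.1⟩,
        S.1.nodup,
        fun x hx => (Stmt8.mem_pset.mp S.2).2.2 x (Finset.mem_def.mpr hx)⟩
      left_inv := fun p => by
        apply Subtype.ext
        apply Nat.Partition.ext
        dsimp only
        rw [Multiset.toFinset_val]
        exact Multiset.dedup_eq_self.mpr p.2.1
      right_inv := fun S => by
        apply Subtype.ext
        exact Stmt8.val_toFinset' S.1 }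

theorem stmt8 (α n : ℕ) (hα : 1 ≤ α) :
    Q (5 * α) 5 (5 * n + 3) ≡ 0 [MOD 2] ∧ Q (5 * α) 5 (5 * n + 4) ≡ 0 [MOD 2] := by
  constructor
  · have h := Stmt8.main_even hα 3 (Or.inl rfl) n
    rw [Q_eq_pset, Nat.modEq_zero_iff_dvd]
    exact (ZMod.natCast_eq_zero_iff _ 2).mp h
  · have h := Stmt8.main_even hα 4 (Or.inr rfl) n
    rw [Q_eq_pset, Nat.modEq_zero_iff_dvd]
    exact (ZMod.natCast_eq_zero_iff _ 2).mp h
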